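/- Let f : [0,∞)×{1,…,n} → ℝ have cadlag coordinates with nonnegative jumps. For points p = (x,n), q = (y,m) with x ≤ y and m < ℓ' ≤ n, the last passage value satisfies the metric composition law: f[p → q] = sup_{z ∈ [x,y]} ( f[p → (z, ℓ')] + f[(z, ℓ'-1) → q] ), where f[(a,i) → (b,j)] = sup over paths of Σ (f_r(t_{r-1}) - f_r(t_r⁻)). -/

import Mathlib

open Filter Set

/-- Left limit with the convention `f(0⁻) = 0`. -/
noncomputable def lml (f : ℝ → ℝ) (z : ℝ) : ℝ := if z ≤ 0 then 0 else Function.leftLim f z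

/-- Cadlag on `[0, ∞)`: right-continuous at every `x ≥ 0`, left limits exist at every `x > 0`. -/
def Cadlag (f : ℝ → ℝ) : Prop :=
  (∀ x : ℝ, 0 ≤ x → ContinuousWithinAt f (Set.Ici x) x) ∧
  (∀ x : ℝ, 0 < x → ∃ l : ℝ, Filter.Tendsto f (nhdsWithin x (Set.Iio x)) (nhds l))

/-- All jumps are nonnegative (with the convention `f(0⁻) = 0`). -/
def NonnegJumps (f : ℝ → ℝ) : Prop := ∀ z : ℝ, 0 ≤ z → lml f z ≤ f z

/-- `S f₁ f₂ x y = sup_{z ∈ [x,y]} (f₂ z - f₁ (z⁻))`. -/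
noncomputable def S (f₁ f₂ : ℝ → ℝ) (x y : ℝ) : ℝ :=
  sSup ((fun z => f₂ z - lml f₁ z) '' Set.Icc x y)

/-- `Sm f₁ f₂ x y = sup_{z ∈ [x,y)} (f₂ z - f₁ (z⁻))`. -/
noncomputable def Sm (f₁ f₂ : ℝ → ℝ) (x y : ℝ) : ℝ :=
  sSup ((fun z => f₂ z - lml f₁ z) '' Set.Ico x y)

/-- Jump times of a path from `(x, a)` (bottom line `a`) to `(y, b)` (top line `b ≤ a`):
`t a = x`, `t (b-1) = y`, and `t` is nonincreasing in the index on `[b-1, a]`. -/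
def IsPathJT (a b : ℕ) (x y : ℝ) (t : ℕ → ℝ) : Prop :=
  t a = x ∧ t (b - 1) = y ∧ ∀ i : ℕ, b - 1 ≤ i → i < a → t (i + 1) ≤ t i

/-- Length of the path with jump times `t`: `∑_{i=b}^{a} (f_i(t_{i-1}) - f_i(t_i⁻))`. -/
noncomputable def pathLen (f : ℕ → ℝ → ℝ) (a b : ℕ) (t : ℕ → ℝ) : ℝ :=
  ∑ i ∈ Finset.Icc b a, (f i (t (i - 1)) - lml (f i) (t i))

/-- Last passage value from `(x, a)` to `(y, b)` across `f`. -/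
noncomputable def LPV (f : ℕ → ℝ → ℝ) (a b : ℕ) (x y : ℝ) : ℝ :=
  sSup {v : ℝ | ∃ t : ℕ → ℝ, IsPathJT a b x y t ∧ v = pathLen f a b t}

/-- A cadlag function (and its left limits) is bounded on `[0, y]`. -/
lemma cadlag_bound (f : ℝ → ℝ) (hf : Cadlag f) (y : ℝ) :
    ∃ M : ℝ, 0 ≤ M ∧ (∀ w, 0 ≤ w → w ≤ y → |f w| ≤ M) ∧
      (∀ w, 0 ≤ w → w ≤ y → |lml f w| ≤ M) := by
  obtain ⟨M₀, hM₀, hbd⟩ : ∃ M : ℝ, 0 ≤ M ∧ ∀ w, 0 ≤ w → w ≤ y → |f w| ≤ M := by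
    rcases lt_or_ge y 0 with hy | hy
    · exact ⟨0, le_refl 0, fun w h0 hw => absurd (h0.trans hw) (not_le.2 hy)⟩
    have key : ∀ z : ℝ, ∃ (M : ℝ) (U : Set ℝ), 0 ≤ M ∧ (z ∈ Icc (0:ℝ) y → U ∈ nhds z) ∧
        (∀ w ∈ U, 0 ≤ w → |f w| ≤ M) := by
      intro z
      by_cases hz : z ∈ Icc (0:ℝ) y
      · have hz0 : 0 ≤ z := hz.1
        -- right side
        have hr : Tendsto f (nhdsWithin z (Ici z)) (nhds (f z)) := hf.1 z hz0
        have hr' : ∀ᶠ w in nhdsWithin z (Ici z), |f w| < |f z| + 1 :=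
          Tendsto.eventually_lt_const (lt_add_one _) hr.abs
        obtain ⟨Vr, hVr, hVrb⟩ := hr'.exists_mem
        -- left side
        obtain ⟨Ml, Vl, hVl, hVlb⟩ : ∃ (Ml : ℝ) (Vl : Set ℝ), Vl ∈ nhdsWithin z (Iio z) ∧
            ∀ w ∈ Vl, 0 ≤ w → |f w| ≤ Ml := by
          rcases eq_or_lt_of_le hz0 with h0 | h0
          · exact ⟨0, Iio z, self_mem_nhdsWithin,
              fun w hw h0w => absurd (h0w.trans_lt (h0 ▸ hw)) (lt_irrefl _)⟩
          · obtain ⟨L, hL⟩ := hf.2 z h0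
            have h1 : ∀ᶠ w in nhdsWithin z (Iio z), |f w| < |L| + 1 :=
              Tendsto.eventually_lt_const (lt_add_one _) hL.abs
            obtain ⟨V, hV, hVb⟩ := h1.exists_mem
            exact ⟨|L| + 1, V, hV, fun w hw _ => (hVb w hw).le⟩
        refine ⟨max (max Ml (|f z| + 1)) 0, Vl ∪ Vr, le_max_right _ _, fun _ => ?_, ?_⟩
        · rw [← nhdsLT_sup_nhdsGE z]
          exact mem_sup.2 ⟨mem_of_superset hVl subset_union_left,
            mem_of_superset hVr subset_union_right⟩
        · rintro w (hw | hw) h0w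
          · exact le_trans (hVlb w hw h0w) (le_trans (le_max_left _ _) (le_max_left _ _))
          · exact le_trans (hVrb w hw).le (le_trans (le_max_right _ _) (le_max_left _ _))
      · exact ⟨0, ∅, le_refl 0, fun h => absurd h hz, fun w hw => absurd hw (notMem_empty w)⟩
    choose M U hM0 hU hMb using key
    obtain ⟨t, ht, hcov⟩ := isCompact_Icc.elim_nhds_subcover U (fun z hz => hU z hz)
    refine ⟨∑ z ∈ t, M z, Finset.sum_nonneg (fun z _ => hM0 z), fun w h0 hw => ?_⟩
    obtain ⟨z, hzt, hwz⟩ := Set.mem_iUnion₂.1 (hcov ⟨h0, hw⟩)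
    exact le_trans (hMb z w hwz h0) (Finset.single_le_sum (fun i _ => hM0 i) hzt)
  refine ⟨M₀, hM₀, hbd, fun w h0 hw => ?_⟩
  rcases le_or_gt w 0 with h | h
  · simp [lml, h, hM₀]
  · obtain ⟨L, hL⟩ := hf.2 w h
    rw [lml, if_neg (not_le.2 h),
      leftLim_eq_of_tendsto hL]
    refine le_of_tendsto hL.abs ?_
    filter_upwards [Ioo_mem_nhdsLT h] with v hv
    exact hbd v hv.1.le (hv.2.le.trans hw)

lemma path_chain {a b : ℕ} {x y : ℝ} {t : ℕ → ℝ} (ht : IsPathJT a b x y t) :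
    ∀ i j : ℕ, b - 1 ≤ i → i ≤ j → j ≤ a → t j ≤ t i := by
  intro i j hbi hij hja
  induction j, hij using Nat.le_induction with
  | base => exact le_refl _
  | succ j hij ih =>
      exact le_trans (ht.2.2 j (le_trans hbi hij) (by omega)) (ih (by omega))

lemma path_mem {a b : ℕ} {x y : ℝ} {t : ℕ → ℝ} (ht : IsPathJT a b x y t)
    {i : ℕ} (h1 : b - 1 ≤ i) (h2 : i ≤ a) : x ≤ t i ∧ t i ≤ y :=
  ⟨ht.1 ▸ path_chain ht i a h1 h2 le_rfl, ht.2.1 ▸ path_chain ht (b-1) i le_rfl h1 h2⟩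

lemma path_exists (a b : ℕ) (hb : 1 ≤ b) (hba : b ≤ a) {x y : ℝ} (hxy : x ≤ y) :
    IsPathJT a b x y (fun i => if i = a then x else y) := by
  refine ⟨if_pos rfl, if_neg (by omega), fun i h1 h2 => ?_⟩
  by_cases h : i + 1 = a
  · simp only [if_pos h, if_neg (show i ≠ a by omega)]; exact hxy
  · simp only [if_neg h, if_neg (show i ≠ a by omega)]; exact le_refl _

lemma pathLen_bound (f : ℕ → ℝ → ℝ) {a b : ℕ} (hb : 1 ≤ b) {x y Y : ℝ} (hx : 0 ≤ x)
    (hyY : y ≤ Y) (M : ℕ → ℝ)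
    (hM : ∀ i, b ≤ i → i ≤ a → ∀ w, 0 ≤ w → w ≤ Y → |f i w| ≤ M i ∧ |lml (f i) w| ≤ M i)
    {t : ℕ → ℝ} (ht : IsPathJT a b x y t) :
    pathLen f a b t ≤ ∑ i ∈ Finset.Icc b a, 2 * M i := by
  refine Finset.sum_le_sum (fun i hi => ?_)
  obtain ⟨hbi, hia⟩ := Finset.mem_Icc.1 hi
  obtain ⟨h1x, h1y⟩ := path_mem ht (show b - 1 ≤ i - 1 by omega) (show i - 1 ≤ a by omega)
  obtain ⟨h2x, h2y⟩ := path_mem ht (show b - 1 ≤ i by omega) hia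
  have hA := (hM i hbi hia (t (i-1)) (hx.trans h1x) (h1y.trans hyY)).1
  have hB := (hM i hbi hia (t i) (hx.trans h2x) (h2y.trans hyY)).2
  have hA' := (abs_le.1 hA).2
  have hB' := (abs_le.1 hB).1
  linarith

lemma sum_split {m l n : ℕ} (hm : 1 ≤ m) (hml : m < l) (hln : l ≤ n) (g : ℕ → ℝ) :
    ∑ i ∈ Finset.Icc m n, g i = ∑ i ∈ Finset.Icc m (l-1), g i + ∑ i ∈ Finset.Icc l n, g i := by
  have h : Finset.Icc m n = Finset.Icc m (l-1) ∪ Finset.Icc l n := by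
    ext i; simp only [Finset.mem_Icc, Finset.mem_union]; omega
  rw [h, Finset.sum_union]
  rw [Finset.disjoint_left]
  intro i hi hi'
  simp only [Finset.mem_Icc] at hi hi'
  omega

theorem stmt16 (n m l : ℕ) (hm : 1 ≤ m) (hml : m < l) (hln : l ≤ n)
    (f : ℕ → ℝ → ℝ)
    (hcad : ∀ i : ℕ, 1 ≤ i → i ≤ n → Cadlag (f i))
    (hjmp : ∀ i : ℕ, 1 ≤ i → i ≤ n → NonnegJumps (f i))
    (x y : ℝ) (hx : 0 ≤ x) (hxy : x ≤ y) :
    LPV f n m x y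
      = sSup ((fun z => LPV f n l x z + LPV f (l - 1) m z y) '' Set.Icc x y) := by
  classical
  -- bounds for each f i
  have key : ∀ i : ℕ, ∃ M : ℝ, 0 ≤ M ∧ (1 ≤ i → i ≤ n →
      (∀ w, 0 ≤ w → w ≤ y → |f i w| ≤ M) ∧ (∀ w, 0 ≤ w → w ≤ y → |lml (f i) w| ≤ M)) := by
    intro i
    by_cases hi : 1 ≤ i ∧ i ≤ n
    · obtain ⟨M, hM0, h1, h2⟩ := cadlag_bound (f i) (hcad i hi.1 hi.2) y
      exact ⟨M, hM0, fun _ _ => ⟨h1, h2⟩⟩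
    · exact ⟨0, le_refl 0, fun h1 h2 => absurd ⟨h1, h2⟩ hi⟩
  choose M hM0 hMb using key
  -- generic set for LPV
  set A : ℕ → ℕ → ℝ → ℝ → Set ℝ := fun a b x' y' =>
    {v : ℝ | ∃ t : ℕ → ℝ, IsPathJT a b x' y' t ∧ v = pathLen f a b t} with hA
  have hlpv : ∀ a b x' y', LPV f a b x' y' = sSup (A a b x' y') := fun _ _ _ _ => rfl
  have hbdd : ∀ a b : ℕ, ∀ x' y' : ℝ, 1 ≤ b → a ≤ n → 0 ≤ x' → y' ≤ y →
      (∑ i ∈ Finset.Icc b a, 2 * M i) ∈ upperBounds (A a b x' y') := by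
    rintro a b x' y' hb han hx' hy' v ⟨t, ht, rfl⟩
    refine pathLen_bound f hb hx' hy' M (fun i hbi hia w h0 hwy => ?_) ht
    obtain ⟨g1, g2⟩ := hMb i (le_trans hb hbi) (le_trans hia han)
    exact ⟨g1 w h0 hwy, g2 w h0 hwy⟩
  have hBdd : ∀ a b : ℕ, ∀ x' y' : ℝ, 1 ≤ b → a ≤ n → 0 ≤ x' → y' ≤ y →
      BddAbove (A a b x' y') := fun a b x' y' h1 h2 h3 h4 => ⟨_, hbdd a b x' y' h1 h2 h3 h4⟩
  have hNe : ∀ a b : ℕ, ∀ x' y' : ℝ, 1 ≤ b → b ≤ a → x' ≤ y' → (A a b x' y').Nonempty :=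
    fun a b x' y' h1 h2 h3 => ⟨_, (fun i => if i = a then x' else y'),
      path_exists a b h1 h2 h3, rfl⟩
  have hl1 : 1 ≤ l - 1 := by omega
  have hml1 : m ≤ l - 1 := by omega
  have hl1n : l - 1 ≤ n := by omega
  -- the RHS set
  set B : Set ℝ := (fun z => LPV f n l x z + LPV f (l - 1) m z y) '' Set.Icc x y with hB
  have hBne : B.Nonempty := ⟨_, ⟨x, ⟨le_refl x, hxy⟩, rfl⟩⟩
  have hBbdd : BddAbove B := by
    refine ⟨(∑ i ∈ Finset.Icc l n, 2 * M i) + (∑ i ∈ Finset.Icc m (l-1), 2 * M i), ?_⟩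
    rintro v ⟨z, hz, rfl⟩
    have h1 : LPV f n l x z ≤ ∑ i ∈ Finset.Icc l n, 2 * M i := by
      rw [hlpv]
      exact csSup_le (hNe n l x z (by omega) hln hz.1)
        (hbdd n l x z (by omega) le_rfl hx (hz.2))
    have h2 : LPV f (l-1) m z y ≤ ∑ i ∈ Finset.Icc m (l-1), 2 * M i := by
      rw [hlpv]
      exact csSup_le (hNe (l-1) m z y hm hml1 hz.2)
        (hbdd (l-1) m z y hm hl1n (hx.trans hz.1) le_rfl)
    exact add_le_add h1 h2
  apply le_antisymm
  · -- LHS ≤ RHS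
    rw [hlpv]
    refine csSup_le (hNe n m x y hm (by omega) hxy) ?_
    rintro v ⟨t, ht, rfl⟩
    set z := t (l - 1) with hzdef
    obtain ⟨hzx, hzy⟩ := path_mem ht (show m - 1 ≤ l - 1 by omega) hl1n
    have ht1 : IsPathJT n l x z t := ⟨ht.1, rfl, fun i h1 h2 => ht.2.2 i (by omega) h2⟩
    have ht2 : IsPathJT (l-1) m z y t := ⟨rfl, ht.2.1, fun i h1 h2 => ht.2.2 i h1 (by omega)⟩
    have hsplit : pathLen f n m t = pathLen f (l-1) m t + pathLen f n l t :=
      sum_split hm hml hln _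
    have hle1 : pathLen f n l t ≤ LPV f n l x z := by
      rw [hlpv]
      exact le_csSup (hBdd n l x z (by omega) le_rfl hx hzy) ⟨t, ht1, rfl⟩
    have hle2 : pathLen f (l-1) m t ≤ LPV f (l-1) m z y := by
      rw [hlpv]
      exact le_csSup (hBdd (l-1) m z y hm hl1n (hx.trans hzx) le_rfl) ⟨t, ht2, rfl⟩
    have hmem : LPV f n l x z + LPV f (l-1) m z y ∈ B := ⟨z, ⟨hzx, hzy⟩, rfl⟩
    have := le_csSup hBbdd hmem
    linarith
  · -- RHS ≤ LHS
    refine csSup_le hBne ?_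
    rintro v ⟨z, hz, rfl⟩
    have hkey : ∀ v₁ ∈ A n l x z, ∀ v₂ ∈ A (l-1) m z y, v₁ + v₂ ≤ LPV f n m x y := by
      rintro v₁ ⟨t₁, ht₁, rfl⟩ v₂ ⟨t₂, ht₂, rfl⟩
      set t : ℕ → ℝ := fun i => if i < l - 1 then t₂ i else t₁ i with htdef
      have htl1 : t (l-1) = t₁ (l-1) := if_neg (lt_irrefl _)
      have hglue : IsPathJT n m x y t := by
        refine ⟨?_, ?_, ?_⟩
        · have : t n = t₁ n := if_neg (by omega)
          rw [this, ht₁.1]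
        · have : t (m-1) = t₂ (m-1) := if_pos (by omega)
          rw [this, ht₂.2.1]
        · intro i h1 h2
          by_cases hc : i + 1 < l - 1
          · have e1 : t (i+1) = t₂ (i+1) := if_pos hc
            have e2 : t i = t₂ i := if_pos (by omega)
            rw [e1, e2]
            exact ht₂.2.2 i h1 (by omega)
          · by_cases hc2 : i < l - 1
            · have hi1 : i + 1 = l - 1 := by omega
              have e1 : t (i+1) = t₁ (l-1) := by rw [hi1]; exact htl1
              have e2 : t i = t₂ i := if_pos hc2
              rw [e1, e2, ht₁.2.1, ← ht₂.1]
              exact path_chain ht₂ i (l-1) h1 (by omega) le_rfl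
            · have e1 : t (i+1) = t₁ (i+1) := if_neg (by omega)
              have e2 : t i = t₁ i := if_neg hc2
              rw [e1, e2]
              exact ht₁.2.2 i (by omega) h2
      have hlen : pathLen f n m t = pathLen f (l-1) m t₂ + pathLen f n l t₁ := by
        rw [show pathLen f n m t = _ from sum_split hm hml hln _]
        congr 1
        · refine Finset.sum_congr rfl (fun i hi => ?_)
          obtain ⟨hbi, hia⟩ := Finset.mem_Icc.1 hi
          have e1 : t (i-1) = t₂ (i-1) := if_pos (by omega)
          have e2 : t i = t₂ i := by
            by_cases hc : i < l - 1
            · exact if_pos hc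
            · have hi' : i = l - 1 := by omega
              rw [hi', htl1, ht₁.2.1, ← ht₂.1]
          rw [e1, e2]
        · refine Finset.sum_congr rfl (fun i hi => ?_)
          obtain ⟨hbi, hia⟩ := Finset.mem_Icc.1 hi
          have e1 : t (i-1) = t₁ (i-1) := if_neg (by omega)
          have e2 : t i = t₁ i := if_neg (by omega)
          rw [e1, e2]
      have hmem : pathLen f n m t ∈ A n m x y := ⟨t, hglue, rfl⟩
      have := le_csSup (hBdd n m x y hm le_rfl hx le_rfl) hmem
      rw [hlpv]
      linarith
    have hne1 := hNe n l x z (by omega) hln hz.1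
    have hne2 := hNe (l-1) m z y hm hml1 hz.2
    have h2 : LPV f (l-1) m z y ≤ LPV f n m x y - LPV f n l x z := by
      rw [hlpv (l-1) m z y]
      refine csSup_le hne2 (fun v₂ hv₂ => ?_)
      rw [le_sub_iff_add_le]
      have h1 : LPV f n l x z ≤ LPV f n m x y - v₂ := by
        rw [hlpv n l x z]
        refine csSup_le hne1 (fun v₁ hv₁ => ?_)
        rw [le_sub_iff_add_le]
        exact hkey v₁ hv₁ v₂ hv₂
      linarith
    show LPV f n l x z + LPV f (l - 1) m z y ≤ LPV f n m x y
    linarith
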